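/- Let H be a complex Hilbert space and let A, B be bounded linear operators on H. Suppose there exist bounded linear operators V₁, V₂, V₃ on H such that the range of B ∘ V₁ ∘ P_{A*} + V₂ ∘ N_A is contained in the range of A, and the range of V₃* ∘ N_B − A ∘ V₁* ∘ P_{B*} is contained in the range of B. Then there exist bounded linear operators X, Y on H with A ∘ X = B ∘ V₁ ∘ P_{A*} + V₂ ∘ N_A and Y ∘ B* = N_B ∘ V₃ − P_{B*} ∘ V₁ ∘ A*, and consequently A ∘ X ∘ A* + B ∘ Y ∘ B* = 0. -/

import Mathlib

open ContinuousLinearMap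

variable {H : Type*} [NormedAddCommGroup H] [InnerProductSpace ℂ H] [CompleteSpace H]

/-- The orthogonal projection of `H` onto the closure of the range of `A`,
regarded as a bounded operator on `H`. -/
noncomputable def rangeProj (A : H →L[ℂ] H) : H →L[ℂ] H :=
  haveI : CompleteSpace (LinearMap.range (A : H →ₗ[ℂ] H)).topologicalClosure :=
    (Submodule.isClosed_topologicalClosure _).completeSpace_coe
  (LinearMap.range (A : H →ₗ[ℂ] H)).topologicalClosure.subtypeL ∘L
    Submodule.orthogonalProjectionOnto (LinearMap.range (A : H →ₗ[ℂ] H)).topologicalClosure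

set_option maxHeartbeats 1000000 in
/-- Douglas factorization: range inclusion gives bounded solution of `A X = C`. -/
lemma douglas_factor (A C : H →L[ℂ] H) (h : LinearMap.range (C : H →ₗ[ℂ] H) ≤ LinearMap.range (A : H →ₗ[ℂ] H)) :
    ∃ X : H →L[ℂ] H, A ∘L X = C := by
  set K : Submodule ℂ H := (A.ker)ᗮ with hK
  haveI : CompleteSpace (A.ker) :=
    (ContinuousLinearMap.isClosed_ker A).completeSpace_coe
  have hex : ∀ v : H, ∃! y : H, y ∈ K ∧ A y = C v := by
    intro v
    obtain ⟨u, hu⟩ := h (LinearMap.mem_range_self (C : H →ₗ[ℂ] H) v)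
    refine ⟨u - (A.ker).orthogonalProjectionOnto u,
      ⟨Submodule.sub_starProjection_mem_orthogonal u, ?_⟩, ?_⟩
    · have : A ((A.ker).starProjection u) = 0 :=
        ((A.ker).orthogonalProjectionOnto u).2
      simp [map_sub, this, show A u = C v from hu]
    · rintro y ⟨hyK, hyA⟩
      have hmem : y - (u - (A.ker).orthogonalProjectionOnto u) ∈ K :=
        Submodule.sub_mem _ hyK (Submodule.sub_starProjection_mem_orthogonal u)
      have hker : y - (u - (A.ker).orthogonalProjectionOnto u) ∈ A.ker := by
        have : A (u - (A.ker).orthogonalProjectionOnto u) = C v := by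
          have h0 : A ((A.ker).starProjection u) = 0 :=
            ((A.ker).orthogonalProjectionOnto u).2
          simp [map_sub, h0, show A u = C v from hu]
        simp [LinearMap.mem_ker, map_sub, hyA, this, show A u = C v from hu,
          show A ((A.ker).starProjection u) = 0 from ((A.ker).orthogonalProjectionOnto u).2]
      have : y - (u - (A.ker).orthogonalProjectionOnto u) = 0 := by
        have := (Submodule.mem_orthogonal _ _).mp hmem _ hker
        simpa [inner_self_eq_zero] using this
      exact sub_eq_zero.mp this
  classical
  let f : H → H := fun v => (hex v).choose
  have hf : ∀ v, f v ∈ K ∧ A (f v) = C v := fun v => (hex v).choose_spec.1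
  have huniq : ∀ v y, y ∈ K → A y = C v → y = f v := fun v y h1 h2 =>
    (hex v).choose_spec.2 y ⟨h1, h2⟩
  let g : H →ₗ[ℂ] H :=
    { toFun := f
      map_add' := fun a b => by
        refine (huniq (a + b) (f a + f b)
          (Submodule.add_mem _ (hf a).1 (hf b).1) ?_).symm
        simp [map_add, (hf a).2, (hf b).2]
      map_smul' := fun c a => by
        refine (huniq (c • a) (c • f a)
          (Submodule.smul_mem _ _ (hf a).1) ?_).symm
        simp [map_smul, (hf a).2] }
  have hgraph : IsClosed (g.graph : Set (H × H)) := by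
    have : (g.graph : Set (H × H)) =
        {p : H × H | p.2 ∈ K} ∩ {p : H × H | A p.2 - C p.1 = 0} := by
      ext p
      simp only [Set.mem_inter_iff, Set.mem_setOf_eq, SetLike.mem_coe,
        LinearMap.mem_graph_iff]
      constructor
      · intro hp2
        rw [hp2]
        exact ⟨(hf p.1).1, by show A (f p.1) - C p.1 = 0; rw [(hf p.1).2, sub_self]⟩
      · rintro ⟨h1, h2⟩
        exact huniq p.1 p.2 h1 (by rwa [sub_eq_zero] at h2)
    rw [this]
    exact (IsClosed.preimage continuous_snd (Submodule.isClosed_orthogonal _)).inter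
      (isClosed_eq (by continuity) continuous_const)
  refine ⟨ContinuousLinearMap.ofIsClosedGraph hgraph, ?_⟩
  ext v
  exact (hf v).2

lemma rangeProj_comp (T : H →L[ℂ] H) : rangeProj T ∘L T = T := by
  ext x
  show rangeProj T (T x) = T x
  haveI : CompleteSpace (LinearMap.range (T : H →ₗ[ℂ] H)).topologicalClosure :=
    (Submodule.isClosed_topologicalClosure _).completeSpace_coe
  have hx : T x ∈ (LinearMap.range (T : H →ₗ[ℂ] H)).topologicalClosure :=
    Submodule.le_topologicalClosure _ (LinearMap.mem_range_self (T : H →ₗ[ℂ] H) x)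
  show (LinearMap.range (T : H →ₗ[ℂ] H)).topologicalClosure.starProjection (T x) = T x
  exact Submodule.starProjection_eq_self_iff.mpr hx

lemma rangeProj_adjoint (T : H →L[ℂ] H) : adjoint (rangeProj T) = rangeProj T := by
  haveI : CompleteSpace (LinearMap.range (T : H →ₗ[ℂ] H)).topologicalClosure :=
    (Submodule.isClosed_topologicalClosure _).completeSpace_coe
  exact (isSelfAdjoint_starProjection (LinearMap.range (T : H →ₗ[ℂ] H)).topologicalClosure).adjoint_eq

/-- Theorem 3.6: if `range (B V₁ P_{A*} + V₂ N_A) ⊆ range A` and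
`range (V₃* N_B - A V₁* P_{B*}) ⊆ range B`, then there are `X, Y` with
`A X = B V₁ P_{A*} + V₂ N_A`, `Y B* = N_B V₃ - P_{B*} V₁ A*`, and hence
`A X A* + B Y B* = 0`. -/
theorem stmt9 (A B V₁ V₂ V₃ : H →L[ℂ] H)
    (h1 : LinearMap.range
        ((B ∘L V₁ ∘L rangeProj (adjoint A) + V₂ ∘L (1 - rangeProj (adjoint A)) : H →L[ℂ] H) : H →ₗ[ℂ] H) ≤
      LinearMap.range (A : H →ₗ[ℂ] H))
    (h2 : LinearMap.range
        ((adjoint V₃ ∘L (1 - rangeProj (adjoint B)) -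
          A ∘L adjoint V₁ ∘L rangeProj (adjoint B) : H →L[ℂ] H) : H →ₗ[ℂ] H) ≤
      LinearMap.range (B : H →ₗ[ℂ] H)) :
    ∃ X Y : H →L[ℂ] H,
      A ∘L X = B ∘L V₁ ∘L rangeProj (adjoint A) + V₂ ∘L (1 - rangeProj (adjoint A)) ∧
      Y ∘L adjoint B =
        (1 - rangeProj (adjoint B)) ∘L V₃ - rangeProj (adjoint B) ∘L V₁ ∘L adjoint A ∧
      A ∘L X ∘L adjoint A + B ∘L Y ∘L adjoint B = 0 := by
  set P := rangeProj (adjoint A) with hP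
  set Q := rangeProj (adjoint B) with hQ
  obtain ⟨X, hX⟩ := douglas_factor A _ h1
  obtain ⟨Z, hZ⟩ := douglas_factor B _ h2
  have hPA : P ∘L adjoint A = adjoint A := rangeProj_comp (adjoint A)
  have hQB : Q ∘L adjoint B = adjoint B := rangeProj_comp (adjoint B)
  have hQsa : adjoint Q = Q := by rw [hQ]; exact rangeProj_adjoint _
  have ha1 : adjoint (1 : H →L[ℂ] H) = 1 := by rw [← star_eq_adjoint, star_one]
  have hBQ : B ∘L Q = B := by
    have h' : adjoint Q ∘L adjoint B = adjoint B := by rw [hQsa]; exact hQB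
    have := congrArg ContinuousLinearMap.adjoint h'
    rwa [adjoint_comp, adjoint_adjoint, adjoint_adjoint] at this
  have hY : adjoint Z ∘L adjoint B = (1 - Q) ∘L V₃ - Q ∘L V₁ ∘L adjoint A := by
    have := congrArg ContinuousLinearMap.adjoint hZ
    rw [adjoint_comp] at this
    rw [this, map_sub, adjoint_comp, adjoint_comp, adjoint_comp, adjoint_adjoint,
      adjoint_adjoint, map_sub, ha1, hQsa, comp_assoc]
  refine ⟨X, adjoint Z, hX, hY, ?_⟩
  ext x
  have hXx : A (X (adjoint A x)) =
      B (V₁ (P (adjoint A x))) + V₂ (adjoint A x - P (adjoint A x)) :=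
    ContinuousLinearMap.ext_iff.mp hX (adjoint A x)
  have hYx : adjoint Z (adjoint B x) = V₃ x - Q (V₃ x) - Q (V₁ (adjoint A x)) :=
    ContinuousLinearMap.ext_iff.mp hY x
  have hPA' : P (adjoint A x) = adjoint A x := ContinuousLinearMap.ext_iff.mp hPA x
  have hBQ' : ∀ y, B (Q y) = B y := fun y => ContinuousLinearMap.ext_iff.mp hBQ y
  show A (X (adjoint A x)) + B (adjoint Z (adjoint B x)) = 0
  rw [hXx, hYx, hPA']
  simp only [sub_self, map_zero, map_sub, hBQ']
  abel
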